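/- arXiv:1409.5312 — 2 statements merged into one kernel-verified Lean document; each statement's English description precedes it below -/
import Mathlib

section
/- For every natural number n ≥ 2, the n-cube ω^n (i.e., the n-grid on ℕ^n whose i-th equivalence relation relates two n-tuples iff all of their coordinates coincide except possibly the i-th one) admits an acceptable coloring. -/
/-- Auxiliary: an index where `x` attains its minimum. -/
noncomputable def chiMin {n : ℕ} (hn : 0 < n) (x : Fin n → ℕ) : Fin n :=
  (Finset.univ.filter (fun i => ∀ j, x i ≤ x j)).min' (by
    obtain ⟨i, -, hi⟩ := Finset.exists_min_image Finset.univ x ⟨⟨0, hn⟩, Finset.mem_univ _⟩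
    exact ⟨i, by simpa using fun j => hi j (Finset.mem_univ j)⟩)

lemma chiMin_spec {n : ℕ} (hn : 0 < n) (x : Fin n → ℕ) (j : Fin n) :
    x (chiMin hn x) ≤ x j := by
  have h := Finset.min'_mem (Finset.univ.filter (fun i => ∀ j, x i ≤ x j)) (by
    obtain ⟨i, -, hi⟩ := Finset.exists_min_image Finset.univ x ⟨⟨0, hn⟩, Finset.mem_univ _⟩
    exact ⟨i, by simpa using fun j => hi j (Finset.mem_univ j)⟩)
  rw [Finset.mem_filter] at h
  exact h.2 j

/-- For every `n ≥ 2`, the `n`-cube `ω^n` (on `ℕ^n`, where `E_i` relates two tuples iff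
all coordinates except possibly the `i`-th coincide) admits an acceptable coloring. -/
theorem nat_cube_admits_acceptable_coloring (n : ℕ) (hn : 2 ≤ n) :
    ∃ χ : (Fin n → ℕ) → Fin n, ∀ (a : Fin n → ℕ) (i : Fin n),
      {x : Fin n → ℕ | (∀ j : Fin n, j ≠ i → a j = x j) ∧ χ x = i}.Finite := by
  have hpos : 0 < n := by omega
  refine ⟨chiMin hpos, fun a i => ?_⟩
  have : Nontrivial (Fin n) := Fin.nontrivial_iff_two_le.mpr hn
  obtain ⟨j0, hj0⟩ := exists_ne i
  apply ((Set.finite_Iic (a j0)).image (fun k => Function.update a i k)).subset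
  rintro x ⟨hco, hchi⟩
  refine ⟨x i, ?_, ?_⟩
  · have h1 : x (chiMin hpos x) ≤ x j0 := chiMin_spec hpos x j0
    rw [hchi] at h1
    rw [← hco j0 hj0] at h1
    exact h1
  · funext j
    by_cases hj : j = i
    · subst hj; simp
    · simp [Function.update_of_ne hj, hco j hj]
end

section
/- Let {A_α : α < ω₁} be a family of infinite subsets of ℕ that is almost disjoint (i.e., A_α ∩ A_β is finite whenever α ≠ β), and let A = {(n, α) ∈ ℕ × ω₁ : n ∈ A_α}, regarded as a 2-grid with the equivalence relations inherited from the 2-cube ℕ × ω₁ (E_0 relates pairs with the same second coordinate, E_1 relates pairs with the same first coordinate). Then the 2-grid A does not admit an acceptable coloring. -/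
/-- For an almost disjoint family `{A_α : α < ω₁}` of infinite subsets of `ℕ`, the 2-grid
`A = {(n, α) : n ∈ A_α} ⊆ ℕ × ω₁` (with `E_0` = same second coordinate, `E_1` = same first
coordinate) does not admit an acceptable coloring. -/
theorem ad_family_grid_no_acceptable_coloring
    (Afam : (Cardinal.aleph 1 : Cardinal.{0}).ord.ToType → Set ℕ)
    (hinf : ∀ α, (Afam α).Infinite)
    (had : ∀ α β, α ≠ β → (Afam α ∩ Afam β).Finite) :
    ¬ ∃ χ : {p : ℕ × (Cardinal.aleph 1 : Cardinal.{0}).ord.ToType // p.1 ∈ Afam p.2} → Fin 2,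
      ∀ a : {p : ℕ × (Cardinal.aleph 1 : Cardinal.{0}).ord.ToType // p.1 ∈ Afam p.2},
        {x : {p : ℕ × (Cardinal.aleph 1 : Cardinal.{0}).ord.ToType // p.1 ∈ Afam p.2} |
          x.val.2 = a.val.2 ∧ χ x = 0}.Finite ∧
        {x : {p : ℕ × (Cardinal.aleph 1 : Cardinal.{0}).ord.ToType // p.1 ∈ Afam p.2} |
          x.val.1 = a.val.1 ∧ χ x = 1}.Finite := by
  rintro ⟨χ, hχ⟩
  let T := (Cardinal.aleph 1 : Cardinal.{0}).ord.ToType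
  -- For each α, pick n ∈ A_α with χ (n, α) = 1
  have key : ∀ α : T, ∃ n, ∃ h : n ∈ Afam α, χ ⟨(n, α), h⟩ = 1 := by
    intro α
    obtain ⟨n₀, hn₀⟩ := (hinf α).nonempty
    have hfin := (hχ ⟨(n₀, α), hn₀⟩).1
    have himg : ((fun x => x.val.1) ''
        {x : {p : ℕ × T // p.1 ∈ Afam p.2} | x.val.2 = α ∧ χ x = 0}).Finite := hfin.image _
    obtain ⟨n, hnA, hnim⟩ := ((hinf α).diff himg).nonempty
    refine ⟨n, hnA, ?_⟩
    have hne : χ ⟨(n, α), hnA⟩ ≠ 0 := fun h0 => hnim ⟨⟨(n, α), hnA⟩, ⟨rfl, h0⟩, rfl⟩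
    omega
  choose f hf hf1 using key
  have hCfin : ∀ n : ℕ, {α : T | f α = n}.Finite := by
    intro n
    rcases Set.eq_empty_or_nonempty {α : T | f α = n} with he | ⟨α₀, hα₀⟩
    · simp [he]
    · have hn0 : n ∈ Afam α₀ := hα₀ ▸ hf α₀
      have hS := (hχ ⟨(n, α₀), hn0⟩).2
      refine Set.Finite.of_finite_image (f := fun α => (⟨(f α, α), hf α⟩ :
        {p : ℕ × T // p.1 ∈ Afam p.2})) (hS.subset ?_) ?_
      · rintro x ⟨α, hα, rfl⟩
        exact ⟨hα, hf1 α⟩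
      · intro a _ b _ h
        exact congrArg (fun x => x.val.2) h
  have huniv : (Set.univ : Set T) = ⋃ n : ℕ, {α : T | f α = n} := by
    ext α; simp
  have hcnt : (Set.univ : Set T).Countable := by
    rw [huniv]; exact Set.countable_iUnion fun n => (hCfin n).countable
  have : Cardinal.mk T ≤ Cardinal.aleph0 := by
    haveI := Set.countable_univ_iff.mp hcnt
    exact Cardinal.mk_le_aleph0
  rw [Cardinal.mk_ord_toType] at this
  exact absurd this (not_le.mpr Cardinal.aleph0_lt_aleph_one)
end
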